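/- For the sequence of matrices M_n = ((10^n, 1),(1, 10^n)), the n-fold product M_1 M_2 ⋯ M_n has eigenvalues ∏_{k=1}^n(10^k+1) and ∏_{k=1}^n(10^k-1), and the ratio of the two eigenvalues converges to α = ∏_{k=1}^∞ (10^k-1)/(10^k+1), a limit strictly between 0 and 1; consequently the normalized first column of the product converges to ((1+α)/2, (1-α)/2) and the normalized second column to ((1-α)/2, (1+α)/2), which are distinct. -/

import Mathlib

open Finset Filter Matrix

noncomputable def M4 (n : ℕ) : Matrix (Fin 2) (Fin 2) ℝ := !![(10:ℝ)^n, 1; 1, (10:ℝ)^n]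

noncomputable def P4 (n : ℕ) : Matrix (Fin 2) (Fin 2) ℝ :=
  ((List.range n).map (fun t => M4 (t + 1))).prod

/-- Normalization of a column `(x, y)`: divide by `x + y`. -/
noncomputable def normalize2 (v : Fin 2 → ℝ) : Fin 2 → ℝ := (v 0 + v 1)⁻¹ • v

private lemma prod_one_sub_ge (s : Finset ℕ) (a : ℕ → ℝ) (h0 : ∀ k, 0 ≤ a k)
    (h1 : ∀ k, a k ≤ 1) : 1 - ∑ k ∈ s, a k ≤ ∏ k ∈ s, (1 - a k) := by
  induction s using Finset.cons_induction with
  | empty => simp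
  | cons i s hi ih =>
    rw [Finset.prod_cons, Finset.sum_cons]
    have hS : 0 ≤ ∑ k ∈ s, a k := Finset.sum_nonneg fun k _ => h0 k
    have h2 : (1 - a i) * (1 - ∑ k ∈ s, a k) ≤ (1 - a i) * ∏ k ∈ s, (1 - a k) :=
      mul_le_mul_of_nonneg_left ih (by linarith [h1 i])
    nlinarith [h0 i, mul_nonneg (h0 i) hS]

private lemma sum_a_le (n : ℕ) :
    ∑ k ∈ Finset.Icc 1 n, (2 / ((10:ℝ)^k + 1)) ≤ 2/9 - (2/9) * (1/10:ℝ)^n := by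
  induction n with
  | zero => simp
  | succ n ih =>
    rw [Finset.sum_Icc_succ_top (by omega)]
    have hp : (0:ℝ) < (10:ℝ)^(n+1) := by positivity
    have h1 : 2 / ((10:ℝ)^(n+1) + 1) ≤ 2 / (10:ℝ)^(n+1) := by
      rw [div_le_div_iff₀ (by positivity) hp]; nlinarith
    have h2 : (2:ℝ) / (10:ℝ)^(n+1) = 2 * (1/10:ℝ)^(n+1) := by
      rw [div_pow, one_pow]; ring
    have h3 : ((1:ℝ)/10)^(n+1) = (1/10) * (1/10)^n := by ring
    nlinarith [pow_pos (by norm_num : (0:ℝ) < 1/10) n]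

private lemma ratio_eq (k : ℕ) :
    ((10:ℝ)^k - 1) / ((10:ℝ)^k + 1) = 1 - 2 / ((10:ℝ)^k + 1) := by
  have h : (10:ℝ)^k + 1 ≠ 0 := by positivity
  field_simp
  ring

private lemma p_ge (n : ℕ) :
    (7:ℝ)/9 ≤ ∏ k ∈ Finset.Icc 1 n, (((10:ℝ)^k - 1) / ((10:ℝ)^k + 1)) := by
  have ha0 : ∀ k, 0 ≤ 2 / ((10:ℝ)^k + 1) := fun k => by positivity
  have ha1 : ∀ k, 2 / ((10:ℝ)^k + 1) ≤ 1 := by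
    intro k
    rw [div_le_one (by positivity)]
    have : (1:ℝ) ≤ (10:ℝ)^k := one_le_pow₀ (by norm_num)
    linarith
  calc (7:ℝ)/9 ≤ 1 - ∑ k ∈ Finset.Icc 1 n, (2 / ((10:ℝ)^k + 1)) := by
        have := sum_a_le n
        have : (0:ℝ) < (1/10:ℝ)^n := by positivity
        linarith [sum_a_le n]
    _ ≤ ∏ k ∈ Finset.Icc 1 n, (1 - 2 / ((10:ℝ)^k + 1)) := prod_one_sub_ge _ _ ha0 ha1
    _ = _ := by exact Finset.prod_congr rfl fun k _ => (ratio_eq k).symm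

private lemma p_antitone :
    Antitone (fun n => ∏ k ∈ Finset.Icc 1 n, (((10:ℝ)^k - 1) / ((10:ℝ)^k + 1))) := by
  apply antitone_nat_of_succ_le
  intro n
  rw [Finset.prod_Icc_succ_top (by omega)]
  have hr0 : (0:ℝ) ≤ ((10:ℝ)^(n+1) - 1) / ((10:ℝ)^(n+1) + 1) := by
    apply div_nonneg _ (by positivity)
    have : (1:ℝ) ≤ (10:ℝ)^(n+1) := one_le_pow₀ (by norm_num)
    linarith
  have hr1 : ((10:ℝ)^(n+1) - 1) / ((10:ℝ)^(n+1) + 1) ≤ 1 := by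
    rw [div_le_one (by positivity)]; linarith
  have hp : 0 ≤ ∏ k ∈ Finset.Icc 1 n, (((10:ℝ)^k - 1) / ((10:ℝ)^k + 1)) := by
    linarith [p_ge n]
  nlinarith

private lemma M4_mulVec_one (m : ℕ) : M4 m *ᵥ ![1, 1] = ((10:ℝ)^m + 1) • ![1, 1] := by
  funext i
  fin_cases i <;> simp [M4, mulVec, dotProduct, Fin.sum_univ_two] <;> ring

private lemma M4_mulVec_neg (m : ℕ) : M4 m *ᵥ ![1, -1] = ((10:ℝ)^m - 1) • ![1, -1] := by
  funext i
  fin_cases i <;> simp [M4, mulVec, dotProduct, Fin.sum_univ_two] <;> ring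

private lemma P4_succ (n : ℕ) : P4 (n+1) = P4 n * M4 (n+1) := by
  simp [P4, List.range_succ]

private lemma P4_one : ∀ n : ℕ, P4 n *ᵥ ![1, 1] =
    (∏ k ∈ Finset.Icc 1 n, ((10:ℝ)^k + 1)) • ![1, 1] := by
  intro n
  induction n with
  | zero => simp [P4]
  | succ n ih =>
    rw [Finset.prod_Icc_succ_top (by omega), P4_succ, ← Matrix.mulVec_mulVec,
      M4_mulVec_one, Matrix.mulVec_smul, ih, smul_smul, mul_comm]

private lemma P4_neg : ∀ n : ℕ, P4 n *ᵥ ![1, -1] =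
    (∏ k ∈ Finset.Icc 1 n, ((10:ℝ)^k - 1)) • ![1, -1] := by
  intro n
  induction n with
  | zero => simp [P4]
  | succ n ih =>
    rw [Finset.prod_Icc_succ_top (by omega), P4_succ, ← Matrix.mulVec_mulVec,
      M4_mulVec_neg, Matrix.mulVec_smul, ih, smul_smul, mul_comm]

theorem stmt_4 :
    ∃ α : ℝ, 0 < α ∧ α < 1 ∧
      Tendsto (fun n : ℕ => ∏ k ∈ Finset.Icc 1 n, (((10:ℝ)^k - 1) / ((10:ℝ)^k + 1)))
        atTop (nhds α) ∧
      (∀ n : ℕ, P4 n *ᵥ ![1, 1] = (∏ k ∈ Finset.Icc 1 n, ((10:ℝ)^k + 1)) • ![1, 1]) ∧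
      (∀ n : ℕ, P4 n *ᵥ ![1, -1] = (∏ k ∈ Finset.Icc 1 n, ((10:ℝ)^k - 1)) • ![1, -1]) ∧
      Tendsto (fun n : ℕ => normalize2 (fun i => P4 n i 0)) atTop
        (nhds ![(1 + α) / 2, (1 - α) / 2]) ∧
      Tendsto (fun n : ℕ => normalize2 (fun i => P4 n i 1)) atTop
        (nhds ![(1 - α) / 2, (1 + α) / 2]) ∧
      (![(1 + α) / 2, (1 - α) / 2] : Fin 2 → ℝ) ≠ ![(1 - α) / 2, (1 + α) / 2] := by
  set p : ℕ → ℝ := fun n => ∏ k ∈ Finset.Icc 1 n, (((10:ℝ)^k - 1) / ((10:ℝ)^k + 1)) with hp_def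
  have hbdd : BddBelow (Set.range p) := ⟨7/9, by rintro x ⟨n, rfl⟩; exact p_ge n⟩
  set α : ℝ := ⨅ n, p n with hα_def
  have htend : Tendsto p atTop (nhds α) := tendsto_atTop_ciInf p_antitone hbdd
  have hαpos : 0 < α := lt_of_lt_of_le (by norm_num) (le_ciInf p_ge)
  have hαlt : α < 1 := by
    have h1 : α ≤ p 1 := ciInf_le hbdd 1
    have : p 1 = 9/11 := by norm_num [hp_def]
    linarith
  -- entries of P4
  have hA : ∀ n, (0:ℝ) < ∏ k ∈ Finset.Icc 1 n, ((10:ℝ)^k + 1) :=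
    fun n => Finset.prod_pos fun k _ => by positivity
  have hq : ∀ n, p n = (∏ k ∈ Finset.Icc 1 n, ((10:ℝ)^k - 1)) /
      (∏ k ∈ Finset.Icc 1 n, ((10:ℝ)^k + 1)) := by
    intro n; simp only [hp_def]; exact Finset.prod_div_distrib _ _
  have key : ∀ n : ℕ,
      (normalize2 (fun i => P4 n i 0) = ![(1 + p n)/2, (1 - p n)/2]) ∧
      (normalize2 (fun i => P4 n i 1) = ![(1 - p n)/2, (1 + p n)/2]) := by
    intro n
    set A := ∏ k ∈ Finset.Icc 1 n, ((10:ℝ)^k + 1) with hA_def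
    set B := ∏ k ∈ Finset.Icc 1 n, ((10:ℝ)^k - 1) with hB_def
    have hApos := hA n
    have e1 := congrFun (P4_one n) 0
    have e2 := congrFun (P4_one n) 1
    have e3 := congrFun (P4_neg n) 0
    have e4 := congrFun (P4_neg n) 1
    simp [mulVec, dotProduct, Fin.sum_univ_two] at e1 e2 e3 e4
    have h00 : P4 n 0 0 = (A + B)/2 := by linarith
    have h01 : P4 n 0 1 = (A - B)/2 := by linarith
    have h10 : P4 n 1 0 = (A - B)/2 := by linarith
    have h11 : P4 n 1 1 = (A + B)/2 := by linarith
    have hpn : p n = B / A := hq n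
    have hAne : A ≠ 0 := ne_of_gt hApos
    constructor <;> (funext i; fin_cases i) <;>
      simp [normalize2, h00, h01, h10, h11, hpn] <;>
      (first
        | rw [show (A + B)/2 + (A - B)/2 = A by ring]
        | rw [show (A - B)/2 + (A + B)/2 = A by ring]) <;>
      field_simp <;> ring
  have t1 : Tendsto (fun n => (1 + p n)/2) atTop (nhds ((1+α)/2)) :=
    (tendsto_const_nhds.add htend).div_const 2
  have t2 : Tendsto (fun n => (1 - p n)/2) atTop (nhds ((1-α)/2)) :=
    (tendsto_const_nhds.sub htend).div_const 2
  refine ⟨α, hαpos, hαlt, htend, P4_one, P4_neg, ?_, ?_, ?_⟩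
  · have : (fun n : ℕ => normalize2 (fun i => P4 n i 0)) =
        fun n => ![(1 + p n)/2, (1 - p n)/2] := funext fun n => (key n).1
    rw [this, tendsto_pi_nhds]
    intro i
    fin_cases i
    · simpa using t1
    · simpa using t2
  · have : (fun n : ℕ => normalize2 (fun i => P4 n i 1)) =
        fun n => ![(1 - p n)/2, (1 + p n)/2] := funext fun n => (key n).2
    rw [this, tendsto_pi_nhds]
    intro i
    fin_cases i
    · simpa using t2
    · simpa using t1
  · intro h
    have := congrFun h 0
    simp at this
    linarith
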